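/- arXiv:2302.00203 — 2 statements merged into one kernel-verified Lean document; each statement's English description precedes it below -/
import Mathlib

section
/- Let c_i ≤ C and c_j ≤ C be positive integers, let T_R be the geometric relation extractor T_R(X_i, X_j) = A_iᵀ ((w_i w_jᵀ) ⊙ D(X_i, X_j)) A_j with fixed A_i, A_j, w_i, w_j (where D(X_i, X_j)(p,q) = ‖X_i(:,p) − X_j(:,q)‖₂), and let T_S(X, s) = X · diag(s') be the geometric message scaler, where s' ∈ ℝ^{c_i} is the average pooling of s ∈ ℝ^C with window size C − c_i + 1 and stride 1. Fix hidden vectors h_i, h_j ∈ ℝ^{d'} and arbitrary functions φ_m : ℝ^{d'} × ℝ^{d'} × ℝ^{d×d} → ℝ^{m} and φ_x : ℝ^{m} → ℝ^{C}. Define m(X_i, X_j) = φ_m(h_i, h_j, T_R(X_i, X_j)/(‖T_R(X_i, X_j)‖_F + 1)) and the geometric message X_pair(X_i, X_j) = T_S(X_i − μ_j 1ᵀ, φ_x(m(X_i, X_j))) ∈ ℝ^{3×c_i}, where μ_j = (1/c_j) Σ_{k=1}^{c_j} X_j(:,k) ∈ ℝ³ is the column mean of X_j. Then for every real orthogonal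 3×3 matrix Q and every t ∈ ℝ³, X_pair(Q X_i + t 1ᵀ, Q X_j + t 1ᵀ) = Q · X_pair(X_i, X_j). -/
open Matrix BigOperators

noncomputable section

/-- Euclidean distance between the `p`-th column of `X` and the `q`-th column of `Y`. -/
def colDist {ci cj : ℕ} (X : Matrix (Fin 3) (Fin ci) ℝ) (Y : Matrix (Fin 3) (Fin cj) ℝ)
    (p : Fin ci) (q : Fin cj) : ℝ :=
  Real.sqrt (∑ r : Fin 3, (X r p - Y r q) ^ 2)

/-- Channel-wise distance matrix `D(X, Y)(p, q) = ‖X(:,p) − Y(:,q)‖₂`. -/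
def Dmat {ci cj : ℕ} (X : Matrix (Fin 3) (Fin ci) ℝ) (Y : Matrix (Fin 3) (Fin cj) ℝ) :
    Matrix (Fin ci) (Fin cj) ℝ :=
  Matrix.of fun p q => colDist X Y p q

/-- Rigid (Euclidean) action `g·X = QX + t1ᵀ`, acting columnwise by `x ↦ Qx + t`. -/
def rigid {c : ℕ} (Q : Matrix (Fin 3) (Fin 3) ℝ) (t : Fin 3 → ℝ)
    (X : Matrix (Fin 3) (Fin c) ℝ) : Matrix (Fin 3) (Fin c) ℝ :=
  Matrix.of fun r p => (∑ s : Fin 3, Q r s * X s p) + t r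

/-- Geometric relation extractor `T_R(X_i, X_j) = A_iᵀ ((w_i w_jᵀ) ⊙ D(X_i, X_j)) A_j`. -/
def TR {ci cj d : ℕ} (Ai : Matrix (Fin ci) (Fin d) ℝ) (Aj : Matrix (Fin cj) (Fin d) ℝ)
    (wi : Fin ci → ℝ) (wj : Fin cj → ℝ)
    (X : Matrix (Fin 3) (Fin ci) ℝ) (Y : Matrix (Fin 3) (Fin cj) ℝ) :
    Matrix (Fin d) (Fin d) ℝ :=
  Aiᵀ * (Matrix.of fun p q => wi p * wj q * Dmat X Y p q) * Aj

/-- Frobenius norm of a real matrix. -/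
def frob {n m : ℕ} (M : Matrix (Fin n) (Fin m) ℝ) : ℝ :=
  Real.sqrt (∑ i : Fin n, ∑ j : Fin m, (M i j) ^ 2)

/-- Average pooling of `s ∈ ℝ^C` with window size `C − c + 1` and stride 1. -/
def avgPool {c C : ℕ} (hc : c ≤ C) (s : Fin C → ℝ) : Fin c → ℝ :=
  fun k => (∑ m : Fin (C - c + 1), s ⟨k.val + m.val, by omega⟩) / ((C - c + 1 : ℕ) : ℝ)

/-- Geometric message scaler `T_S(X, s) = X · diag(s')`. -/
def TS {c C : ℕ} (hc : c ≤ C) (X : Matrix (Fin 3) (Fin c) ℝ) (s : Fin C → ℝ) :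
    Matrix (Fin 3) (Fin c) ℝ :=
  Matrix.of fun r p => X r p * avgPool hc s p

/-- The non-geometric message
`m(X_i, X_j) = φ_m(h_i, h_j, T_R(X_i, X_j) / (‖T_R(X_i, X_j)‖_F + 1))`. -/
def nonGeoMsg {ci cj d d' m' : ℕ}
    (Ai : Matrix (Fin ci) (Fin d) ℝ) (Aj : Matrix (Fin cj) (Fin d) ℝ)
    (wi : Fin ci → ℝ) (wj : Fin cj → ℝ)
    (φm : (Fin d' → ℝ) → (Fin d' → ℝ) → Matrix (Fin d) (Fin d) ℝ → (Fin m' → ℝ))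
    (hi hj : Fin d' → ℝ)
    (X : Matrix (Fin 3) (Fin ci) ℝ) (Y : Matrix (Fin 3) (Fin cj) ℝ) : Fin m' → ℝ :=
  φm hi hj ((frob (TR Ai Aj wi wj X Y) + 1)⁻¹ • TR Ai Aj wi wj X Y)

/-- The geometric message
`X_pair(X_i, X_j) = T_S(X_i − μ_j 1ᵀ, φ_x(m(X_i, X_j)))`, with `μ_j` the column mean of `X_j`. -/
def geoMsg {ci cj d d' m' C : ℕ} (hci : ci ≤ C)
    (Ai : Matrix (Fin ci) (Fin d) ℝ) (Aj : Matrix (Fin cj) (Fin d) ℝ)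
    (wi : Fin ci → ℝ) (wj : Fin cj → ℝ)
    (φm : (Fin d' → ℝ) → (Fin d' → ℝ) → Matrix (Fin d) (Fin d) ℝ → (Fin m' → ℝ))
    (φx : (Fin m' → ℝ) → (Fin C → ℝ))
    (hi hj : Fin d' → ℝ)
    (X : Matrix (Fin 3) (Fin ci) ℝ) (Y : Matrix (Fin 3) (Fin cj) ℝ) :
    Matrix (Fin 3) (Fin ci) ℝ :=
  TS hci (Matrix.of fun r p => X r p - (∑ q : Fin cj, Y r q) / (cj : ℝ))
    (φx (nonGeoMsg Ai Aj wi wj φm hi hj X Y))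

lemma orth_norm_sq (Q : Matrix (Fin 3) (Fin 3) ℝ) (hQ : Qᵀ * Q = 1) (v : Fin 3 → ℝ) :
    ∑ r : Fin 3, (∑ s : Fin 3, Q r s * v s) ^ 2 = ∑ s : Fin 3, v s ^ 2 := by
  have h : ∀ a b : Fin 3, ∑ r : Fin 3, Q r a * Q r b = if a = b then 1 else 0 := by
    intro a b
    have := congrFun (congrFun hQ a) b
    simpa [Matrix.mul_apply, Matrix.transpose_apply, Matrix.one_apply] using this
  calc ∑ r : Fin 3, (∑ s : Fin 3, Q r s * v s) ^ 2
      = ∑ a : Fin 3, ∑ b : Fin 3, (∑ r : Fin 3, Q r a * Q r b) * (v a * v b) := by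
        simp only [sq, Finset.sum_mul, Finset.mul_sum]
        rw [Finset.sum_comm]
        apply Finset.sum_congr rfl; intro a _
        rw [Finset.sum_comm]
        apply Finset.sum_congr rfl; intro b _
        apply Finset.sum_congr rfl; intro r _
        ring
    _ = ∑ s : Fin 3, v s ^ 2 := by
        simp [h, ite_mul, Finset.sum_ite_eq', sq]

lemma colDist_rigid {ci cj : ℕ} (Q : Matrix (Fin 3) (Fin 3) ℝ) (hQ : Qᵀ * Q = 1)
    (t : Fin 3 → ℝ) (X : Matrix (Fin 3) (Fin ci) ℝ) (Y : Matrix (Fin 3) (Fin cj) ℝ)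
    (p : Fin ci) (q : Fin cj) :
    colDist (rigid Q t X) (rigid Q t Y) p q = colDist X Y p q := by
  unfold colDist rigid
  congr 1
  have : ∀ r : Fin 3,
      ((Matrix.of fun r p => (∑ s : Fin 3, Q r s * X s p) + t r) r p
        - (Matrix.of fun r q => (∑ s : Fin 3, Q r s * Y s q) + t r) r q)
      = ∑ s : Fin 3, Q r s * (X s p - Y s q) := by
    intro r
    simp only [Matrix.of_apply, mul_sub, Finset.sum_sub_distrib]
    ring
  rw [Finset.sum_congr rfl fun r _ => by rw [this r]]
  exact orth_norm_sq Q hQ fun s => X s p - Y s q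

lemma TR_rigid {ci cj d : ℕ} (Ai : Matrix (Fin ci) (Fin d) ℝ) (Aj : Matrix (Fin cj) (Fin d) ℝ)
    (wi : Fin ci → ℝ) (wj : Fin cj → ℝ)
    (Q : Matrix (Fin 3) (Fin 3) ℝ) (hQ : Qᵀ * Q = 1) (t : Fin 3 → ℝ)
    (X : Matrix (Fin 3) (Fin ci) ℝ) (Y : Matrix (Fin 3) (Fin cj) ℝ) :
    TR Ai Aj wi wj (rigid Q t X) (rigid Q t Y) = TR Ai Aj wi wj X Y := by
  unfold TR Dmat
  congr 1
  congr 1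
  ext p q
  simp [colDist_rigid Q hQ t X Y p q]

/-- The geometric message is O(3)-equivariant (translations cancel):
`X_pair(QX_i + t1ᵀ, QX_j + t1ᵀ) = Q · X_pair(X_i, X_j)`. -/
theorem geoMsg_rigid_equivariant {ci cj d d' m' C : ℕ}
    (hcipos : 0 < ci) (hcjpos : 0 < cj) (hci : ci ≤ C) (hcj : cj ≤ C)
    (Ai : Matrix (Fin ci) (Fin d) ℝ) (Aj : Matrix (Fin cj) (Fin d) ℝ)
    (wi : Fin ci → ℝ) (wj : Fin cj → ℝ)
    (φm : (Fin d' → ℝ) → (Fin d' → ℝ) → Matrix (Fin d) (Fin d) ℝ → (Fin m' → ℝ))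
    (φx : (Fin m' → ℝ) → (Fin C → ℝ))
    (hi hj : Fin d' → ℝ)
    (X : Matrix (Fin 3) (Fin ci) ℝ) (Y : Matrix (Fin 3) (Fin cj) ℝ)
    (Q : Matrix (Fin 3) (Fin 3) ℝ) (hQ : Qᵀ * Q = 1) (t : Fin 3 → ℝ) :
    geoMsg hci Ai Aj wi wj φm φx hi hj (rigid Q t X) (rigid Q t Y)
      = Q * geoMsg hci Ai Aj wi wj φm φx hi hj X Y := by
  have hcj' : (cj : ℝ) ≠ 0 := Nat.cast_ne_zero.mpr hcjpos.ne'
  unfold geoMsg nonGeoMsg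
  rw [TR_rigid Ai Aj wi wj Q hQ t X Y]
  ext r p
  unfold TS rigid
  simp only [Matrix.of_apply, Matrix.mul_apply]
  have hmean : (∑ q : Fin cj, ((∑ s : Fin 3, Q r s * Y s q) + t r)) / (cj : ℝ)
      = (∑ s : Fin 3, Q r s * ((∑ q : Fin cj, Y s q) / (cj : ℝ))) + t r := by
    have h1 : (∑ q : Fin cj, ((∑ s : Fin 3, Q r s * Y s q) + t r))
        = (∑ s : Fin 3, Q r s * ∑ q : Fin cj, Y s q) + (cj : ℝ) * t r := by
      rw [Finset.sum_add_distrib, Finset.sum_const, Finset.card_univ, Fintype.card_fin,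
        Finset.sum_comm]
      simp [Finset.mul_sum, nsmul_eq_mul]
    rw [h1, add_div, mul_div_cancel_left₀ _ hcj', Finset.sum_div]
    congr 1
    apply Finset.sum_congr rfl; intro s _
    rw [mul_div_assoc]
  rw [hmean]
  have : (∑ s : Fin 3, Q r s * X s p) + t r
      - ((∑ s : Fin 3, Q r s * ((∑ q : Fin cj, Y s q) / (cj : ℝ))) + t r)
      = ∑ s : Fin 3, Q r s * (X s p - (∑ q : Fin cj, Y s q) / (cj : ℝ)) := by
    simp [mul_sub, Finset.sum_sub_distrib]
  rw [this, Finset.sum_mul]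
  apply Finset.sum_congr rfl; intro s _
  ring

end
end

section
/- Let ι (paratope indices) and κ (antibody indices) be finite index sets; for each i ∈ ι let P_i, S_i ∈ ℝ^{3×k_i} be multi-channel coordinate matrices of the same shape (native and shadow paratope coordinates), and for each j ∈ κ let X_j ∈ ℝ^{3×c_j} (antibody coordinates). Suppose (Q₀, t₀) ∈ O(3) × ℝ³ is a global minimizer of the alignment loss L_{P,S}(Q, t) = Σ_{i∈ι} ‖Q P_i + t 1ᵀ − S_i‖_F², and define the docked coordinates X̃_j = Q₀ X_j + t₀ 1ᵀ. Fix Q₁, Q₂ ∈ O(3) and t₁, t₂ ∈ ℝ³, and set P'_i = Q₂ P_i + t₂ 1ᵀ, S'_i = Q₁ S_i + t₁ 1ᵀ, X'_j = Q₂ X_j + t₂ 1ᵀ. Then (Q', t') := (Q₁ Q₀ Q₂ᵀ, Q₁ t₀ + t₁ − Q₁ Q₀ Q₂ᵀ t₂) is a global minimizer of L_{P',S'} over O(3) × ℝ³, and Q' X'_j + t' 1ᵀ = Q₁ X̃_j + t₁ 1ᵀ for every j ∈ κ; that is, the docking procedure is E(3)-equivariant with respect to the transformation applied to the shadow paratope.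 -/
open Matrix BigOperators

noncomputable section

/-- Alignment loss `L_{P,S}(Q, t) = Σ_i ‖Q P_i + t 1ᵀ − S_i‖_F²`. -/
def alignLoss {ι : Type*} [Fintype ι] {k : ι → ℕ}
    (P S : (i : ι) → Matrix (Fin 3) (Fin (k i)) ℝ)
    (Q : Matrix (Fin 3) (Fin 3) ℝ) (t : Fin 3 → ℝ) : ℝ :=
  ∑ i, ∑ r : Fin 3, ∑ p : Fin (k i), (rigid Q t (P i) r p - S i r p) ^ 2

/-- `(Q, t)` is a global minimizer of the alignment loss `L_{P,S}` over `O(3) × ℝ³`. -/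
def IsKabschMin {ι : Type*} [Fintype ι] {k : ι → ℕ}
    (P S : (i : ι) → Matrix (Fin 3) (Fin (k i)) ℝ)
    (Q : Matrix (Fin 3) (Fin 3) ℝ) (t : Fin 3 → ℝ) : Prop :=
  Qᵀ * Q = 1 ∧ ∀ (Q' : Matrix (Fin 3) (Fin 3) ℝ) (t' : Fin 3 → ℝ), Q'ᵀ * Q' = 1 →
    alignLoss P S Q t ≤ alignLoss P S Q' t'

lemma rigid_apply {c : ℕ} (Q : Matrix (Fin 3) (Fin 3) ℝ) (t : Fin 3 → ℝ)
    (X : Matrix (Fin 3) (Fin c) ℝ) (r : Fin 3) (p : Fin c) :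
    rigid Q t X r p = (Q * X) r p + t r := by
  simp [rigid, Matrix.mul_apply]

lemma rigid_rigid {c : ℕ} (Qa Qb : Matrix (Fin 3) (Fin 3) ℝ) (ta tb : Fin 3 → ℝ)
    (X : Matrix (Fin 3) (Fin c) ℝ) :
    rigid Qa ta (rigid Qb tb X) = rigid (Qa * Qb) (Qa.mulVec tb + ta) X := by
  ext r p
  simp only [rigid_apply, Pi.add_apply, Matrix.mul_apply, rigid, Matrix.of_apply,
    mul_add, Finset.sum_add_distrib, Matrix.mulVec, dotProduct, Finset.sum_mul,
    Finset.mul_sum]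
  rw [Finset.sum_comm (γ := Fin 3) (f := fun s u => Qa r s * (Qb s u * X u p))]
  ring_nf

lemma orth_sum_sq (R : Matrix (Fin 3) (Fin 3) ℝ) (hR : Rᵀ * R = 1) (v : Fin 3 → ℝ) :
    ∑ r, (R.mulVec v r) ^ 2 = ∑ r, (v r) ^ 2 := by
  have h : R.mulVec v ⬝ᵥ R.mulVec v = v ⬝ᵥ v := by
    rw [Matrix.dotProduct_mulVec, ← Matrix.mulVec_transpose, Matrix.mulVec_mulVec, hR,
      Matrix.one_mulVec]
  simpa [dotProduct, sq] using h

lemma alignLoss_conj {ι : Type*} [Fintype ι] {k : ι → ℕ}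
    (P S : (i : ι) → Matrix (Fin 3) (Fin (k i)) ℝ)
    (Q₁ Q₂ : Matrix (Fin 3) (Fin 3) ℝ)
    (hQ₁ : Q₁ᵀ * Q₁ = 1) (t₁ t₂ : Fin 3 → ℝ)
    (Q : Matrix (Fin 3) (Fin 3) ℝ) (t : Fin 3 → ℝ) :
    alignLoss (fun i => rigid Q₂ t₂ (P i)) (fun i => rigid Q₁ t₁ (S i)) Q t
      = alignLoss P S (Q₁ᵀ * Q * Q₂) (Q₁ᵀ.mulVec (Q.mulVec t₂ + t - t₁)) := by
  have hQ₁' : Q₁ * Q₁ᵀ = 1 := mul_eq_one_comm.mp hQ₁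
  set A := Q₁ᵀ * Q * Q₂ with hAdef
  set b := Q₁ᵀ.mulVec (Q.mulVec t₂ + t - t₁) with hbdef
  have hA : Q₁ * A = Q * Q₂ := by
    rw [hAdef, ← mul_assoc, ← mul_assoc, hQ₁', one_mul]
  have hb : Q₁.mulVec b = Q.mulVec t₂ + t - t₁ := by
    rw [hbdef, Matrix.mulVec_mulVec, hQ₁', Matrix.one_mulVec]
  unfold alignLoss
  refine Finset.sum_congr rfl fun i _ => ?_
  rw [Finset.sum_comm, Finset.sum_comm (f := fun r p => (rigid A b (P i) r p - S i r p) ^ 2)]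
  refine Finset.sum_congr rfl fun p _ => ?_
  have key : ∀ r : Fin 3,
      rigid Q t (rigid Q₂ t₂ (P i)) r p - rigid Q₁ t₁ (S i) r p
        = Q₁.mulVec (fun s => rigid A b (P i) s p - S i s p) r := by
    intro r
    have expand : Q₁.mulVec (fun s => rigid A b (P i) s p - S i s p) r
        = (Q₁ * (A * P i)) r p + Q₁.mulVec b r - (Q₁ * S i) r p := by
      simp only [Matrix.mulVec, dotProduct, rigid_apply, Matrix.mul_apply, mul_add,
        mul_sub, Finset.sum_add_distrib, Finset.sum_sub_distrib]
    rw [rigid_rigid, expand, ← Matrix.mul_assoc, hA, hb, rigid_apply, rigid_apply]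
    simp only [Pi.add_apply, Pi.sub_apply, mul_assoc]
    ring
  rw [Finset.sum_congr rfl fun r _ => by rw [key r]]
  exact orth_sum_sq Q₁ hQ₁ _

/-- E(3)-equivariance of the docking procedure: if `(Q₀, t₀)` minimizes the alignment of the
native paratope `P` onto the shadow paratope `S`, and the docked antibody coordinates are
`X̃_j = Q₀ X_j + t₀ 1ᵀ`, then after transforming the antibody side by `(Q₂, t₂)` and the
shadow side by `(Q₁, t₁)`, the pair `(Q₁ Q₀ Q₂ᵀ, Q₁ t₀ + t₁ − Q₁ Q₀ Q₂ᵀ t₂)` minimizes the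
transformed alignment loss and its docked coordinates equal `Q₁ X̃_j + t₁ 1ᵀ`. -/
theorem docking_E3_equivariant {ι κ : Type*} [Fintype ι] [Fintype κ]
    {k : ι → ℕ} {c : κ → ℕ}
    (P S : (i : ι) → Matrix (Fin 3) (Fin (k i)) ℝ)
    (X : (j : κ) → Matrix (Fin 3) (Fin (c j)) ℝ)
    (Q₀ : Matrix (Fin 3) (Fin 3) ℝ) (t₀ : Fin 3 → ℝ)
    (hmin : IsKabschMin P S Q₀ t₀)
    (Q₁ Q₂ : Matrix (Fin 3) (Fin 3) ℝ)
    (hQ₁ : Q₁ᵀ * Q₁ = 1) (hQ₂ : Q₂ᵀ * Q₂ = 1)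
    (t₁ t₂ : Fin 3 → ℝ) :
    IsKabschMin (fun i => rigid Q₂ t₂ (P i)) (fun i => rigid Q₁ t₁ (S i))
        (Q₁ * Q₀ * Q₂ᵀ) (Q₁.mulVec t₀ + t₁ - (Q₁ * Q₀ * Q₂ᵀ).mulVec t₂) ∧
      ∀ j : κ, rigid (Q₁ * Q₀ * Q₂ᵀ) (Q₁.mulVec t₀ + t₁ - (Q₁ * Q₀ * Q₂ᵀ).mulVec t₂)
          (rigid Q₂ t₂ (X j))
        = rigid Q₁ t₁ (rigid Q₀ t₀ (X j)) := by
  obtain ⟨hQ₀, hle⟩ := hmin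
  have hQ₁' : Q₁ * Q₁ᵀ = 1 := mul_eq_one_comm.mp hQ₁
  have hQ₂' : Q₂ * Q₂ᵀ = 1 := mul_eq_one_comm.mp hQ₂
  set Q' := Q₁ * Q₀ * Q₂ᵀ with hQ'def
  set t' := Q₁.mulVec t₀ + t₁ - Q'.mulVec t₂ with ht'def
  have hQ'orth : Q'ᵀ * Q' = 1 := by
    rw [hQ'def]
    simp only [Matrix.transpose_mul, Matrix.transpose_transpose, Matrix.mul_assoc]
    rw [← Matrix.mul_assoc Q₁ᵀ Q₁, hQ₁, Matrix.one_mul,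
      ← Matrix.mul_assoc Q₀ᵀ Q₀, hQ₀, Matrix.one_mul, hQ₂']
  have hQ'Q₂ : Q' * Q₂ = Q₁ * Q₀ := by
    rw [hQ'def, mul_assoc, hQ₂, mul_one]
  have ht'vec : Q'.mulVec t₂ + t' = Q₁.mulVec t₀ + t₁ := by
    rw [ht'def]; abel
  have hAQ' : Q₁ᵀ * Q' * Q₂ = Q₀ := by
    rw [mul_assoc, hQ'Q₂, ← mul_assoc, hQ₁, one_mul]
  have hbQ' : Q₁ᵀ.mulVec (Q'.mulVec t₂ + t' - t₁) = t₀ := by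
    have : Q'.mulVec t₂ + t' - t₁ = Q₁.mulVec t₀ := by rw [ht'def]; abel
    rw [this, Matrix.mulVec_mulVec, hQ₁, Matrix.one_mulVec]
  constructor
  · refine ⟨hQ'orth, fun Q'' t'' hQ'' => ?_⟩
    rw [alignLoss_conj P S Q₁ Q₂ hQ₁ t₁ t₂ Q' t', hAQ', hbQ',
      alignLoss_conj P S Q₁ Q₂ hQ₁ t₁ t₂ Q'' t'']
    refine hle _ _ ?_
    simp only [Matrix.transpose_mul, Matrix.transpose_transpose, Matrix.mul_assoc]
    rw [← Matrix.mul_assoc Q₁ Q₁ᵀ, hQ₁', Matrix.one_mul,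
      ← Matrix.mul_assoc Q''ᵀ Q'', hQ'', Matrix.one_mul, hQ₂]
  · intro j
    rw [rigid_rigid, rigid_rigid, hQ'Q₂, ht'vec]

end
end
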